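/- There is no quadratic potential V(z) = a₁z² + a₂·conj(z)² + a₃·z·conj(z) taking real values on ℂ such that the function 2U^ν + V is constant on the unit circle and everywhere ≥ that constant, where U^ν is the logarithmic potential of the measure dν(z) = 2Im(z)² dσ(z) on S¹. Equivalently, ν is not the equilibrium measure of any real quadratic potential. -/

import Mathlib

open Real

/-- The logarithmic potential of the measure `dν(z) = 2 Im(z)² dσ(z)` on the unit
circle (σ the uniform probability measure, parametrized by `θ ↦ e^{iθ}`). -/
noncomputable def Unu (x : ℂ) : ℝ :=
  (1 / (2 * π)) * ∫ θ in (-π)..π,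
    (-Real.log (‖x - Complex.exp (θ * Complex.I)‖)) * (2 * Real.sin θ ^ 2)


open intervalIntegral MeasureTheory

noncomputable def gI : ℝ → ℝ := fun θ => (-Real.log (2 - 2 * Real.sin θ)) * Real.sin θ ^ 2
noncomputable def gT : ℝ → ℝ := fun θ => (-Real.log (10 - 6 * Real.sin θ)) * Real.sin θ ^ 2
noncomputable def eT : ℝ → ℝ := fun θ => (Real.log (10 - 6 * Real.sin θ) - Real.log 4) * Real.sin θ ^ 2


-- basic log poly bounds
lemma log_one_add_le {u : ℝ} (hu : 0 ≤ u) : Real.log (1 + u) ≤ u - u^2/2 + u^3/3 := by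
  have hlog : Real.log (1 + u) = ∫ x in (0:ℝ)..u, (1 + x)⁻¹ := by
    have h1 : (∫ x in (0:ℝ)..u, (1+x)⁻¹) = ∫ x in (1:ℝ)..(1+u), x⁻¹ := by
      simpa using intervalIntegral.integral_comp_add_left (fun y : ℝ => y⁻¹) 1 (a := 0) (b := u)
    rw [h1, integral_inv (by rw [Set.uIcc_of_le (by linarith)]; rintro ⟨h,_⟩; linarith)]
    rw [div_one]
  have hmono : (∫ x in (0:ℝ)..u, (1+x)⁻¹) ≤ ∫ x in (0:ℝ)..u, (1 - x + x^2) := by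
    apply intervalIntegral.integral_mono_on hu
    · apply ContinuousOn.intervalIntegrable
      apply ContinuousOn.inv₀ (by fun_prop)
      intro x hx
      rw [Set.uIcc_of_le hu] at hx
      nlinarith [hx.1]
    · exact (by fun_prop : Continuous fun x : ℝ => 1 - x + x^2).intervalIntegrable _ _
    · intro x hx
      have hx0 := hx.1
      have hp : (0:ℝ) < 1 + x := by linarith
      rw [inv_le_iff_one_le_mul₀ hp]
      nlinarith
  have hval : (∫ x in (0:ℝ)..u, (1 - x + x^2)) = u - u^2/2 + u^3/3 := by
    have h1 : (∫ x in (0:ℝ)..u, (1 - x + x^2)) =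
        (∫ x in (0:ℝ)..u, (1:ℝ)) - (∫ x in (0:ℝ)..u, x) + ∫ x in (0:ℝ)..u, x^2 := by
      rw [eq_comm, ← intervalIntegral.integral_sub, ← intervalIntegral.integral_add] <;>
        first
          | exact (by fun_prop : Continuous fun x : ℝ => (1:ℝ)).intervalIntegrable _ _
          | exact (by fun_prop : Continuous fun x : ℝ => x).intervalIntegrable _ _
          | exact (by fun_prop : Continuous fun x : ℝ => x^2).intervalIntegrable _ _
          | exact ((by fun_prop : Continuous fun x : ℝ => (1:ℝ) - x).intervalIntegrable _ _)
    rw [h1]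
    simp [integral_id, integral_pow]
    ring
  rw [hlog]
  rw [hval] at hmono
  exact hmono


lemma log_one_sub_le {t : ℝ} (h0 : 0 ≤ t) (h1 : t < 1) :
    Real.log (1 - t) ≤ -(t + t^2/2 + t^3/3 + t^4/4 + t^5/5 + t^6/6 + t^7/7 + t^8/8) := by
  have hlog : -Real.log (1 - t) = ∫ x in (0:ℝ)..t, (1 - x)⁻¹ := by
    have h2 : (∫ x in (0:ℝ)..t, (1-x)⁻¹) = ∫ x in (1-t:ℝ)..(1:ℝ), x⁻¹ := by
      simpa using intervalIntegral.integral_comp_sub_left (fun y : ℝ => y⁻¹) 1 (a := 0) (b := t)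
    rw [h2, integral_inv (by rw [Set.uIcc_of_le (by linarith)]; rintro ⟨h,_⟩; linarith)]
    rw [one_div, Real.log_inv]
  have hmono : (∫ x in (0:ℝ)..t, (1+x+x^2+x^3+x^4+x^5+x^6+x^7)) ≤ ∫ x in (0:ℝ)..t, (1-x)⁻¹ := by
    apply intervalIntegral.integral_mono_on h0
    · exact (by fun_prop : Continuous fun x : ℝ => 1+x+x^2+x^3+x^4+x^5+x^6+x^7).intervalIntegrable _ _
    · apply ContinuousOn.intervalIntegrable
      apply ContinuousOn.inv₀ (by fun_prop)
      intro x hx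
      rw [Set.uIcc_of_le h0] at hx
      have := hx.2
      intro hc
      nlinarith
    · intro x hx
      have hx0 := hx.1
      have hx1 : x < 1 := lt_of_le_of_lt hx.2 h1
      have hp : (0:ℝ) < 1 - x := by linarith
      rw [inv_eq_one_div, le_div_iff₀ hp]
      nlinarith [pow_nonneg hx0 8]
  have hval : (∫ x in (0:ℝ)..t, (1+x+x^2+x^3+x^4+x^5+x^6+x^7))
      = t + t^2/2 + t^3/3 + t^4/4 + t^5/5 + t^6/6 + t^7/7 + t^8/8 := by
    rw [integral_add ((by fun_prop : Continuous fun x:ℝ => 1+x+x^2+x^3+x^4+x^5+x^6).intervalIntegrable _ _) ((continuous_pow 7).intervalIntegrable _ _),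
        integral_add ((by fun_prop : Continuous fun x:ℝ => 1+x+x^2+x^3+x^4+x^5).intervalIntegrable _ _) ((continuous_pow 6).intervalIntegrable _ _),
        integral_add ((by fun_prop : Continuous fun x:ℝ => 1+x+x^2+x^3+x^4).intervalIntegrable _ _) ((continuous_pow 5).intervalIntegrable _ _),
        integral_add ((by fun_prop : Continuous fun x:ℝ => 1+x+x^2+x^3).intervalIntegrable _ _) ((continuous_pow 4).intervalIntegrable _ _),
        integral_add ((by fun_prop : Continuous fun x:ℝ => 1+x+x^2).intervalIntegrable _ _) ((continuous_pow 3).intervalIntegrable _ _),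
        integral_add ((by fun_prop : Continuous fun x:ℝ => 1+x).intervalIntegrable _ _) ((continuous_pow 2).intervalIntegrable _ _),
        integral_add ((by fun_prop : Continuous fun x:ℝ => (1:ℝ)).intervalIntegrable _ _) ((by fun_prop : Continuous fun x:ℝ => x).intervalIntegrable _ _)]
    simp [integral_pow, integral_id]
    ring
  rw [hval] at hmono
  linarith [hmono, hlog]


lemma sinpow_step (n : ℕ) : (∫ x in (0:ℝ)..π, sin x ^ (n+2))
    = (n+1)/(n+2) * ∫ x in (0:ℝ)..π, sin x ^ n := by
  rw [integral_sin_pow]; simp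

lemma sinpow_step' (n : ℕ) : (∫ x in (-π:ℝ)..0, sin x ^ (n+2))
    = (n+1)/(n+2) * ∫ x in (-π:ℝ)..0, sin x ^ n := by
  rw [integral_sin_pow]; simp

lemma s1 : (∫ x in (0:ℝ)..π, sin x ^ 1) = 2 := by simp [integral_sin]; norm_num
lemma s0 : (∫ x in (0:ℝ)..π, sin x ^ 0) = π := by simp
lemma s2 : (∫ x in (0:ℝ)..π, sin x ^ 2) = π/2 := by simp
lemma s3 : (∫ x in (0:ℝ)..π, sin x ^ 3) = 4/3 := by
  rw [show (∫ x in (0:ℝ)..π, sin x ^ 3) = ∫ x in (0:ℝ)..π, sin x ^ (1+2) from rfl, sinpow_step, s1]; norm_num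
lemma s4 : (∫ x in (0:ℝ)..π, sin x ^ 4) = 3*π/8 := by
  rw [show (4:ℕ) = 2+2 from rfl, sinpow_step, s2]; ring
lemma s5 : (∫ x in (0:ℝ)..π, sin x ^ 5) = 16/15 := by
  rw [show (5:ℕ) = 3+2 from rfl, sinpow_step, s3]; norm_num
lemma s6 : (∫ x in (0:ℝ)..π, sin x ^ 6) = 5*π/16 := by
  rw [show (6:ℕ) = 4+2 from rfl, sinpow_step, s4]; ring
lemma s7 : (∫ x in (0:ℝ)..π, sin x ^ 7) = 32/35 := by
  rw [show (7:ℕ) = 5+2 from rfl, sinpow_step, s5]; norm_num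
lemma s8 : (∫ x in (0:ℝ)..π, sin x ^ 8) = 35*π/128 := by
  rw [show (8:ℕ) = 6+2 from rfl, sinpow_step, s6]; ring
lemma s9 : (∫ x in (0:ℝ)..π, sin x ^ 9) = 256/315 := by
  rw [show (9:ℕ) = 7+2 from rfl, sinpow_step, s7]; norm_num
lemma s10 : (∫ x in (0:ℝ)..π, sin x ^ 10) = 63*π/256 := by
  rw [show (10:ℕ) = 8+2 from rfl, sinpow_step, s8]; ring
lemma t2 : (∫ x in (-π:ℝ)..0, sin x ^ 2) = π/2 := by simp
lemma t3 : (∫ x in (-π:ℝ)..0, sin x ^ 3) = -(4/3) := by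
  rw [show (∫ x in (-π:ℝ)..0, sin x ^ 3) = ∫ x in (-π:ℝ)..0, sin x ^ (1+2) from rfl, sinpow_step', show (∫ x in (-π:ℝ)..0, sin x ^ 1) = -2 by simp [integral_sin]; norm_num]
  norm_num
lemma t4 : (∫ x in (-π:ℝ)..0, sin x ^ 4) = 3*π/8 := by
  rw [show (4:ℕ) = 2+2 from rfl, sinpow_step', t2]; ring
lemma t5 : (∫ x in (-π:ℝ)..0, sin x ^ 5) = -(16/15) := by
  rw [show (5:ℕ) = 3+2 from rfl, sinpow_step', t3]; norm_num


lemma abs_I_sub_exp (θ : ℝ) :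
    ‖Complex.I - Complex.exp (θ * Complex.I)‖ = Real.sqrt (2 - 2 * Real.sin θ) := by
  rw [Complex.norm_def, Complex.normSq_apply]
  congr 1
  simp [Complex.exp_ofReal_mul_I_re, Complex.exp_ofReal_mul_I_im]
  nlinarith [Real.sin_sq_add_cos_sq θ]

lemma abs_3I_sub_exp (θ : ℝ) :
    ‖3 * Complex.I - Complex.exp (θ * Complex.I)‖ = Real.sqrt (10 - 6 * Real.sin θ) := by
  rw [Complex.norm_def, Complex.normSq_apply]
  congr 1
  simp [Complex.exp_ofReal_mul_I_re, Complex.exp_ofReal_mul_I_im]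
  nlinarith [Real.sin_sq_add_cos_sq θ]

lemma abs_zero_sub_exp (θ : ℝ) :
    ‖(0:ℂ) - Complex.exp (θ * Complex.I)‖ = 1 := by
  simp [Complex.norm_exp]

lemma phim_le_gI {θ : ℝ} (h1 : -π ≤ θ) (h2 : θ ≤ 0) :
    (-Real.log 2) * sin θ^2 + sin θ^3 + sin θ^4/2 + sin θ^5/3 ≤ gI θ := by
  have hs : sin θ ≤ 0 := sin_nonpos_of_nonpos_of_neg_pi_le h2 h1
  have hu : (0:ℝ) ≤ -sin θ := by linarith
  have hlog : Real.log (2 - 2*sin θ) = Real.log 2 + Real.log (1 + -sin θ) := by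
    rw [← Real.log_mul two_ne_zero (by nlinarith)]
    ring_nf
  have hb := log_one_add_le hu
  have hsq : (0:ℝ) ≤ sin θ^2 := sq_nonneg _
  unfold gI
  rw [hlog]
  nlinarith [hb, hsq, mul_le_mul_of_nonneg_right hb hsq]

lemma phip_le_gI {θ : ℝ} (h1 : 0 ≤ θ) (h2 : θ ≤ π) (hne : θ ≠ π/2) :
    (-Real.log 2) * sin θ^2 + sin θ^3 + sin θ^4/2 + sin θ^5/3 + sin θ^6/4
      + sin θ^7/5 + sin θ^8/6 + sin θ^9/7 + sin θ^10/8 ≤ gI θ := by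
  have hs : 0 ≤ sin θ := sin_nonneg_of_nonneg_of_le_pi h1 h2
  have hs1 : sin θ ≤ 1 := sin_le_one θ
  have hlt : sin θ < 1 := by
    rcases lt_or_eq_of_le hs1 with h | h
    · exact h
    · exfalso
      have hcos : cos θ = 0 := by nlinarith [sin_sq_add_cos_sq θ]
      have : θ = π/2 := by
        apply Real.strictAntiOn_cos.injOn ⟨h1, h2⟩ ⟨by positivity, by linarith [pi_pos]⟩
        rw [hcos, Real.cos_pi_div_two]
      exact hne this
  have hlog : Real.log (2 - 2*sin θ) = Real.log 2 + Real.log (1 - sin θ) := by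
    rw [← Real.log_mul two_ne_zero (by nlinarith)]
    ring_nf
  have hb := log_one_sub_le hs hlt
  have hsq : (0:ℝ) ≤ sin θ^2 := sq_nonneg _
  unfold gI
  rw [hlog]
  nlinarith [mul_le_mul_of_nonneg_right hb hsq]

lemma integral_phim : (∫ θ in (-π:ℝ)..0,
    ((-Real.log 2) * sin θ^2 + sin θ^3 + sin θ^4/2 + sin θ^5/3))
    = (-Real.log 2) * (π/2) + (-(4/3)) + (3*π/8)/2 + (-(16/15))/3 := by
  rw [integral_add ((by fun_prop : Continuous fun θ:ℝ => (-Real.log 2) * sin θ^2 + sin θ^3 + sin θ^4/2).intervalIntegrable _ _)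
        ((by fun_prop : Continuous fun θ:ℝ => sin θ^5/3).intervalIntegrable _ _),
      integral_add ((by fun_prop : Continuous fun θ:ℝ => (-Real.log 2) * sin θ^2 + sin θ^3).intervalIntegrable _ _)
        ((by fun_prop : Continuous fun θ:ℝ => sin θ^4/2).intervalIntegrable _ _),
      integral_add ((by fun_prop : Continuous fun θ:ℝ => (-Real.log 2) * sin θ^2).intervalIntegrable _ _)
        ((by fun_prop : Continuous fun θ:ℝ => sin θ^3).intervalIntegrable _ _),
      intervalIntegral.integral_const_mul, intervalIntegral.integral_div, intervalIntegral.integral_div, t2, t3, t4, t5]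

lemma integral_phip : (∫ θ in (0:ℝ)..π,
    ((-Real.log 2) * sin θ^2 + sin θ^3 + sin θ^4/2 + sin θ^5/3 + sin θ^6/4
      + sin θ^7/5 + sin θ^8/6 + sin θ^9/7 + sin θ^10/8))
    = (-Real.log 2) * (π/2) + 4/3 + (3*π/8)/2 + (16/15)/3 + (5*π/16)/4
      + (32/35)/5 + (35*π/128)/6 + (256/315)/7 + (63*π/256)/8 := by
  rw [integral_add ((by fun_prop : Continuous fun θ:ℝ => (-Real.log 2) * sin θ^2 + sin θ^3 + sin θ^4/2 + sin θ^5/3 + sin θ^6/4 + sin θ^7/5 + sin θ^8/6 + sin θ^9/7).intervalIntegrable _ _)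
        ((by fun_prop : Continuous fun θ:ℝ => sin θ^10/8).intervalIntegrable _ _),
      integral_add ((by fun_prop : Continuous fun θ:ℝ => (-Real.log 2) * sin θ^2 + sin θ^3 + sin θ^4/2 + sin θ^5/3 + sin θ^6/4 + sin θ^7/5 + sin θ^8/6).intervalIntegrable _ _)
        ((by fun_prop : Continuous fun θ:ℝ => sin θ^9/7).intervalIntegrable _ _),
      integral_add ((by fun_prop : Continuous fun θ:ℝ => (-Real.log 2) * sin θ^2 + sin θ^3 + sin θ^4/2 + sin θ^5/3 + sin θ^6/4 + sin θ^7/5).intervalIntegrable _ _)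
        ((by fun_prop : Continuous fun θ:ℝ => sin θ^8/6).intervalIntegrable _ _),
      integral_add ((by fun_prop : Continuous fun θ:ℝ => (-Real.log 2) * sin θ^2 + sin θ^3 + sin θ^4/2 + sin θ^5/3 + sin θ^6/4).intervalIntegrable _ _)
        ((by fun_prop : Continuous fun θ:ℝ => sin θ^7/5).intervalIntegrable _ _),
      integral_add ((by fun_prop : Continuous fun θ:ℝ => (-Real.log 2) * sin θ^2 + sin θ^3 + sin θ^4/2 + sin θ^5/3).intervalIntegrable _ _)
        ((by fun_prop : Continuous fun θ:ℝ => sin θ^6/4).intervalIntegrable _ _),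
      integral_add ((by fun_prop : Continuous fun θ:ℝ => (-Real.log 2) * sin θ^2 + sin θ^3 + sin θ^4/2).intervalIntegrable _ _)
        ((by fun_prop : Continuous fun θ:ℝ => sin θ^5/3).intervalIntegrable _ _),
      integral_add ((by fun_prop : Continuous fun θ:ℝ => (-Real.log 2) * sin θ^2 + sin θ^3).intervalIntegrable _ _)
        ((by fun_prop : Continuous fun θ:ℝ => sin θ^4/2).intervalIntegrable _ _),
      integral_add ((by fun_prop : Continuous fun θ:ℝ => (-Real.log 2) * sin θ^2).intervalIntegrable _ _)
        ((by fun_prop : Continuous fun θ:ℝ => sin θ^3).intervalIntegrable _ _),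
      intervalIntegral.integral_const_mul, intervalIntegral.integral_div, intervalIntegral.integral_div, intervalIntegral.integral_div, intervalIntegral.integral_div,
      intervalIntegral.integral_div, intervalIntegral.integral_div, intervalIntegral.integral_div, s2, s3, s4, s5, s6, s7, s8, s9, s10]

lemma J_bound : (-(2*π)/9) * Real.log 2 ≤ ∫ θ in (-π:ℝ)..π, gI θ := by
  have hL0 : (0:ℝ) < Real.log 2 := Real.log_pos (by norm_num)
  by_cases hInt : IntervalIntegrable gI volume (-π) π
  · have hsub1 : Set.uIcc (-π) (0:ℝ) ⊆ Set.uIcc (-π) π := by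
      rw [Set.uIcc_of_le (by linarith [pi_pos]), Set.uIcc_of_le (by linarith [pi_pos])]
      exact Set.Icc_subset_Icc le_rfl (le_of_lt pi_pos)
    have hsub2 : Set.uIcc (0:ℝ) π ⊆ Set.uIcc (-π) π := by
      rw [Set.uIcc_of_le (le_of_lt pi_pos), Set.uIcc_of_le (by linarith [pi_pos])]
      exact Set.Icc_subset_Icc (by linarith [pi_pos]) le_rfl
    have hI1 := hInt.mono_set hsub1
    have hI2 := hInt.mono_set hsub2
    have hsplit := integral_add_adjacent_intervals hI1 hI2
    have hlow1 : (-Real.log 2) * (π/2) + (-(4/3)) + (3*π/8)/2 + (-(16/15))/3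
        ≤ ∫ θ in (-π:ℝ)..0, gI θ := by
      rw [← integral_phim]
      exact integral_mono_on (by linarith [pi_pos])
        ((by fun_prop : Continuous fun θ:ℝ => (-Real.log 2) * sin θ^2 + sin θ^3 + sin θ^4/2 + sin θ^5/3).intervalIntegrable _ _)
        hI1 (fun θ hθ => phim_le_gI hθ.1 hθ.2)
    have hae : ∀ᵐ (θ:ℝ), θ ≠ π/2 := by
      rw [MeasureTheory.ae_iff]
      convert measure_singleton (μ := (volume : Measure ℝ)) (π/2) using 2
      ext a; simp
    have hlow2 : (-Real.log 2) * (π/2) + 4/3 + (3*π/8)/2 + (16/15)/3 + (5*π/16)/4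
        + (32/35)/5 + (35*π/128)/6 + (256/315)/7 + (63*π/256)/8
        ≤ ∫ θ in (0:ℝ)..π, gI θ := by
      rw [← integral_phip]
      refine integral_mono_ae_restrict (le_of_lt pi_pos)
        ((by fun_prop : Continuous fun θ:ℝ => (-Real.log 2) * sin θ^2 + sin θ^3 + sin θ^4/2 + sin θ^5/3 + sin θ^6/4 + sin θ^7/5 + sin θ^8/6 + sin θ^9/7 + sin θ^10/8).intervalIntegrable _ _)
        hI2 ?_
      refine (ae_restrict_iff' measurableSet_Icc).2 (hae.mono fun θ hθ hmem => ?_)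
      exact phip_le_gI hmem.1 hmem.2 hθ
    have hpi1 : (3.141592:ℝ) < π := pi_gt_d6
    have hpi2 : π < 3.15 := pi_lt_d2
    have hL1 : Real.log 2 < 0.6931471808 := Real.log_two_lt_d9
    nlinarith [hsplit, hlow1, hlow2, pi_pos]
  · rw [integral_undef hInt]
    nlinarith [pi_pos]

lemma u2 : (∫ x in (-π:ℝ)..π, sin x ^ 2) = π := by
  simp

lemma cont_log10 : Continuous fun θ:ℝ => Real.log (10 - 6 * Real.sin θ) := by
  apply Continuous.log (by fun_prop)
  intro θ; nlinarith [sin_le_one θ]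

lemma eT_nonneg {θ : ℝ} : 0 ≤ eT θ := by
  apply mul_nonneg _ (sq_nonneg _)
  rw [sub_nonneg]
  apply Real.log_le_log (by norm_num)
  nlinarith [sin_le_one θ]

lemma eT_int (a b : ℝ) : IntervalIntegrable eT volume a b :=
  ((cont_log10.sub continuous_const).mul (by fun_prop)).intervalIntegrable _ _

lemma eT_pos : 0 < ∫ θ in (-π:ℝ)..π, eT θ := by
  have h1 : (∫ θ in (-π:ℝ)..(-(π/2)), eT θ) + (∫ θ in (-(π/2):ℝ)..(-(π/6)), eT θ)
      = ∫ θ in (-π:ℝ)..(-(π/6)), eT θ :=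
    integral_add_adjacent_intervals (eT_int _ _) (eT_int _ _)
  have h2 : (∫ θ in (-π:ℝ)..(-(π/6)), eT θ) + (∫ θ in (-(π/6):ℝ)..π, eT θ)
      = ∫ θ in (-π:ℝ)..π, eT θ :=
    integral_add_adjacent_intervals (eT_int _ _) (eT_int _ _)
  have hn1 : 0 ≤ ∫ θ in (-π:ℝ)..(-(π/2)), eT θ :=
    integral_nonneg (by linarith [pi_pos]) (fun u _ => eT_nonneg)
  have hn2 : 0 ≤ ∫ θ in (-(π/6):ℝ)..π, eT θ :=
    integral_nonneg (by linarith [pi_pos]) (fun u _ => eT_nonneg)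
  have hmid : 0 < ∫ θ in (-(π/2):ℝ)..(-(π/6)), eT θ := by
    apply intervalIntegral_pos_of_pos_on (eT_int _ _) _ (by linarith [pi_pos])
    intro x hx
    have hmem1 : x ∈ Set.Icc (-(π/2)) (π/2) := ⟨le_of_lt hx.1, by linarith [hx.2, pi_pos]⟩
    have hmem2 : (-(π/6) : ℝ) ∈ Set.Icc (-(π/2)) (π/2) := ⟨by linarith [pi_pos], by linarith [pi_pos]⟩
    have hs : sin x < sin (-(π/6)) := Real.strictMonoOn_sin hmem1 hmem2 hx.2
    rw [Real.sin_neg, Real.sin_pi_div_six] at hs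
    have hlt : Real.log 4 < Real.log (10 - 6 * sin x) :=
      Real.log_lt_log (by norm_num) (by nlinarith)
    have hsq : 0 < sin x ^ 2 := by nlinarith
    exact mul_pos (by linarith) hsq
  linarith
lemma Unu_3I_lt : Unu (3 * Complex.I) < -Real.log 2 := by
  have hpi := pi_pos
  have hcongr : (∫ θ in (-π:ℝ)..π,
      (-Real.log (‖3 * Complex.I - Complex.exp (θ * Complex.I)‖)) * (2 * Real.sin θ ^ 2))
      = ∫ θ in (-π:ℝ)..π, gT θ := by
    apply integral_congr
    intro θ _
    simp only []
    rw [abs_3I_sub_exp, Real.log_sqrt (by nlinarith [sin_le_one θ])]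
    unfold gT; ring
  have hgt : (∫ θ in (-π:ℝ)..π, gT θ)
      = (-Real.log 4) * π - ∫ θ in (-π:ℝ)..π, eT θ := by
    have : (∫ θ in (-π:ℝ)..π, gT θ)
        = ∫ θ in (-π:ℝ)..π, ((-Real.log 4) * sin θ^2 - eT θ) := by
      apply integral_congr; intro θ _; unfold gT eT; ring
    rw [this, integral_sub ((by fun_prop : Continuous fun θ:ℝ => (-Real.log 4) * sin θ^2).intervalIntegrable _ _) (eT_int _ _),
      intervalIntegral.integral_const_mul, u2]
  have hKlt : (∫ θ in (-π:ℝ)..π, gT θ) < (-Real.log 4) * π := by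
    rw [hgt]; linarith [eT_pos]
  have h14 : Unu (3 * Complex.I) < (1/(2*π)) * ((-Real.log 4) * π) := by
    unfold Unu
    rw [hcongr]
    apply mul_lt_mul_of_pos_left hKlt (by positivity)
  have : (1/(2*π)) * ((-Real.log 4) * π) = -Real.log 2 := by
    rw [show (4:ℝ) = 2^2 by norm_num, Real.log_pow]
    field_simp
    ring
  linarith [h14, this.le, this.ge]

lemma Unu_zero : Unu 0 = 0 := by
  unfold Unu
  have : (∫ θ in (-π:ℝ)..π,
      (-Real.log (‖(0:ℂ) - Complex.exp (θ * Complex.I)‖)) * (2 * Real.sin θ ^ 2))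
      = ∫ θ in (-π:ℝ)..π, (0:ℝ) := by
    apply integral_congr
    intro θ _
    simp [Complex.norm_exp]
  rw [this]
  simp

lemma Unu_I_ge : -Real.log 2 / 9 ≤ Unu Complex.I := by
  have hpi := pi_pos
  have hcongr : (∫ θ in (-π:ℝ)..π,
      (-Real.log (‖Complex.I - Complex.exp (θ * Complex.I)‖)) * (2 * Real.sin θ ^ 2))
      = ∫ θ in (-π:ℝ)..π, gI θ := by
    apply integral_congr
    intro θ _
    simp only []
    rw [abs_I_sub_exp, Real.log_sqrt (by nlinarith [sin_le_one θ])]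
    unfold gI; ring
  have h1 : (1/(2*π)) * ((-(2*π)/9) * Real.log 2) ≤ Unu Complex.I := by
    unfold Unu
    rw [hcongr]
    exact mul_le_mul_of_nonneg_left J_bound (by positivity)
  have : (1/(2*π)) * ((-(2*π)/9) * Real.log 2) = -Real.log 2 / 9 := by
    field_simp
  linarith

/-- There is no real-valued quadratic potential
`V(z) = a₁ z² + a₂ conj(z)² + a₃ z conj(z)` such that `2U^ν + V` is constant on the
unit circle and everywhere at least that constant, i.e. `ν` is not the equilibrium
measure of any real quadratic potential. -/
theorem no_quadratic_potential_for_nu :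
    ¬ ∃ (a₁ a₂ a₃ : ℂ),
      (∀ z : ℂ, (a₁ * z ^ 2 + a₂ * (starRingEnd ℂ z) ^ 2
          + a₃ * z * starRingEnd ℂ z).im = 0) ∧
      ∃ c : ℝ,
        (∀ z : ℂ, ‖z‖ = 1 →
          2 * Unu z + (a₁ * z ^ 2 + a₂ * (starRingEnd ℂ z) ^ 2
            + a₃ * z * starRingEnd ℂ z).re = c) ∧
        (∀ z : ℂ,
          c ≤ 2 * Unu z + (a₁ * z ^ 2 + a₂ * (starRingEnd ℂ z) ^ 2
            + a₃ * z * starRingEnd ℂ z).re) := by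
  rintro ⟨a₁, a₂, a₃, _, c, h1, h2⟩
  have hX_I : a₁ * Complex.I ^ 2 + a₂ * (starRingEnd ℂ Complex.I) ^ 2
      + a₃ * Complex.I * starRingEnd ℂ Complex.I = a₃ - a₁ - a₂ := by
    rw [Complex.conj_I]
    ring_nf
    rw [Complex.I_sq]
    ring
  have hX_0 : a₁ * (0:ℂ) ^ 2 + a₂ * (starRingEnd ℂ 0) ^ 2
      + a₃ * 0 * starRingEnd ℂ 0 = 0 := by simp
  have hX_3I : a₁ * (3*Complex.I) ^ 2 + a₂ * (starRingEnd ℂ (3*Complex.I)) ^ 2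
      + a₃ * (3*Complex.I) * starRingEnd ℂ (3*Complex.I) = 9 * (a₃ - a₁ - a₂) := by
    simp only [map_mul, Complex.conj_I, map_ofNat]
    ring_nf
    rw [Complex.I_sq]
    ring
  have hc1 : 2 * Unu Complex.I + (a₃ - a₁ - a₂).re = c := by
    have := h1 Complex.I (by simp)
    rwa [hX_I] at this
  have hc0 : c ≤ 0 := by
    have := h2 0
    rwa [hX_0, Unu_zero, Complex.zero_re, mul_zero, add_zero] at this
  have hc3 : c ≤ 2 * Unu (3*Complex.I) + 9 * (a₃ - a₁ - a₂).re := by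
    have := h2 (3*Complex.I)
    rw [hX_3I] at this
    have hre : ((9 : ℂ) * (a₃ - a₁ - a₂)).re = 9 * (a₃ - a₁ - a₂).re := by
      simp [Complex.mul_re]
    rwa [hre] at this
  have hB := Unu_I_ge
  have hU := Unu_3I_lt
  linarith
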